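/- Fix an integer g ≥ 2 and a real t > 0, and set q = e^{−t/2}. Then lim_{N→∞} Z_{U(N)}(g,t) = θ(q), where Z_{U(N)}(g,t) = Σ_λ e^{−(t/2)c₂(λ)} d_λ^{2−2g}, the sum over all nonincreasing tuples λ ∈ ℤ^N, with d_λ = ∏_{1≤i<j≤N} (λ_i − λ_j + j − i)/(j − i), c₂(λ) = (1/N)(Σ_i λ_i² + Σ_{i<j} (λ_i − λ_j)), and θ(q) = Σ_{n∈ℤ} q^{n²}. -/

import Mathlib

/-- The Weyl dimension of a nonincreasing tuple `λ ∈ ℤ^N`: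
`d_λ = ∏_{1 ≤ i < j ≤ N} (λ_i − λ_j + j − i)/(j − i)`. -/
def weylDim (N : ℕ) (l : Fin N → ℤ) : ℚ :=
  ∏ p ∈ Finset.univ.filter (fun p : Fin N × Fin N => p.1 < p.2),
    (((l p.1 : ℚ) - (l p.2 : ℚ) + ((p.2 : ℕ) : ℚ) - ((p.1 : ℕ) : ℚ)) /
      (((p.2 : ℕ) : ℚ) - ((p.1 : ℕ) : ℚ)))

/-- The Casimir number of a nonincreasing tuple `λ ∈ ℤ^N`:
`c₂(λ) = (1/N)(Σ_i λ_i² + Σ_{i<j} (λ_i − λ_j))`. -/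
def casimir (N : ℕ) (l : Fin N → ℤ) : ℚ :=
  ((∑ i : Fin N, ((l i : ℚ)) ^ 2) +
    ∑ p ∈ Finset.univ.filter (fun p : Fin N × Fin N => p.1 < p.2),
      ((l p.1 : ℚ) - (l p.2 : ℚ))) / (N : ℚ)

/-- The Jacobi theta function `θ(q) = Σ_{n ∈ ℤ} q^{n²}`, with values in `[0,∞]`. -/
noncomputable def thetaE (q : ℝ) : ENNReal :=
  ∑' n : ℤ, ENNReal.ofReal (q ^ (n.natAbs ^ 2))

/-- Migdal's formula: the `U(N)` Yang–Mills partition function on a genus-`g` surface of area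
`t`, `Z_{U(N)}(g,t) = Σ_λ q^{c₂(λ)} d_λ^{2−2g}` with `q = e^{−t/2}`, summing over all
nonincreasing tuples `λ ∈ ℤ^N`, with values in `[0,∞]`. -/
noncomputable def ZUN (N : ℕ) (g : ℕ) (t : ℝ) : ENNReal :=
  ∑' l : {l : Fin N → ℤ // ∀ i j : Fin N, i ≤ j → l j ≤ l i},
    ENNReal.ofReal (Real.exp (-(t / 2)) ^ ((casimir N l.1 : ℝ)) *
      (weylDim N l.1 : ℝ) ^ (2 - 2 * (g : ℤ)))


open Finset ENNReal Filter

namespace YM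


abbrev Noninc {N : ℕ} (l : Fin N → ℤ) : Prop := ∀ i j : Fin N, i ≤ j → l j ≤ l i

def fac {N : ℕ} (l : Fin N → ℤ) (p : Fin N × Fin N) : ℚ :=
  ((l p.1 : ℚ) - (l p.2 : ℚ) + ((p.2 : ℕ) : ℚ) - ((p.1 : ℕ) : ℚ)) /
      (((p.2 : ℕ) : ℚ) - ((p.1 : ℕ) : ℚ))

lemma weylDim_eq {N : ℕ} (l : Fin N → ℤ) :
    weylDim N l = ∏ p ∈ Finset.univ.filter (fun p : Fin N × Fin N => p.1 < p.2), fac l p := rfl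

lemma fac_ge_one {N : ℕ} {l : Fin N → ℤ} (hl : Noninc l) {p : Fin N × Fin N} (hp : p.1 < p.2) :
    1 ≤ fac l p := by
  have h1 : (l p.2 : ℚ) ≤ (l p.1 : ℚ) := by exact_mod_cast hl p.1 p.2 hp.le
  have h2 : ((p.1 : ℕ) : ℚ) < ((p.2 : ℕ) : ℚ) := by exact_mod_cast hp
  rw [fac, le_div_iff₀ (by linarith)]
  linarith

lemma fac_pos {N : ℕ} {l : Fin N → ℤ} (hl : Noninc l) {p : Fin N × Fin N} (hp : p.1 < p.2) :
    0 < fac l p := lt_of_lt_of_le one_pos (fac_ge_one hl hp)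

lemma one_le_weylDim {N : ℕ} {l : Fin N → ℤ} (hl : Noninc l) : 1 ≤ weylDim N l := by
  rw [weylDim_eq]
  calc (1:ℚ) = ∏ p ∈ Finset.univ.filter (fun p : Fin N × Fin N => p.1 < p.2), 1 := by simp
  _ ≤ _ := by
      apply Finset.prod_le_prod (by intro i _; norm_num)
      intro p hp
      exact fac_ge_one hl (mem_filter.mp hp).2



lemma prod_tel1 (n : ℕ) : ∏ k ∈ Finset.range n, (((k:ℚ)+2)/((k:ℚ)+1)) = n+1 := by
  induction n with
  | zero => simp
  | succ n ih =>
    rw [Finset.prod_range_succ, ih]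
    have h1 : ((n:ℚ)+1) ≠ 0 := by positivity
    field_simp
    push_cast
    ring

lemma prod_tel2 (n : ℕ) : ∏ k ∈ Finset.range n, (((k:ℚ)+3)/((k:ℚ)+2)) = ((n:ℚ)+2)/2 := by
  induction n with
  | zero => norm_num
  | succ n ih =>
    rw [Finset.prod_range_succ, ih]
    have h1 : ((n:ℚ)+2) ≠ 0 := by positivity
    field_simp
    push_cast
    ring

lemma prod_tel1' (m : ℕ) :
    ∏ k ∈ Finset.range m, (((m:ℚ)-(k:ℚ)+1)/((m:ℚ)-(k:ℚ))) = m+1 := by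
  rw [← prod_tel1 m, ← Finset.prod_range_reflect]
  apply Finset.prod_congr rfl
  intro k hk
  have hk' : k < m := Finset.mem_range.mp hk
  have : ((m - 1 - k : ℕ) : ℚ) = (m:ℚ) - 1 - k := by
    have : m - 1 - k = m - (1 + k) := by omega
    rw [this]
    push_cast [Nat.cast_sub (by omega : 1 + k ≤ m)]
    ring
  rw [this]
  ring_nf


lemma prod_Iio_eq_range {M : Type*} [CommMonoid M] {N : ℕ} (c : Fin N) (g : ℕ → M) :
    ∏ i ∈ Finset.Iio c, g (i:ℕ) = ∏ k ∈ Finset.range (c:ℕ), g k := by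
  have h : Finset.range (c:ℕ) = (Finset.Iio c).image Fin.val := by
    ext k
    simp only [Finset.mem_range, Finset.mem_image, Finset.mem_Iio]
    constructor
    · intro hk
      exact ⟨⟨k, lt_trans hk c.isLt⟩, by exact hk, rfl⟩
    · rintro ⟨i, hi, rfl⟩
      exact hi
  rw [h, Finset.prod_image (fun a _ b _ h => Fin.val_injective h)]

lemma prod_Ioi_eq_range {M : Type*} [CommMonoid M] {N : ℕ} (c : Fin N) (g : ℕ → M) :
    ∏ j ∈ Finset.Ioi c, g (j:ℕ) = ∏ k ∈ Finset.range (N-1-(c:ℕ)), g (k+(c:ℕ)+1) := by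
  have h : (Finset.Ioi c).image Fin.val = (Finset.range (N-1-(c:ℕ))).image (fun k => k+(c:ℕ)+1) := by
    ext m
    simp only [Finset.mem_range, Finset.mem_image, Finset.mem_Ioi]
    constructor
    · rintro ⟨j, hj, rfl⟩
      have h2 := j.isLt
      have h1 : (c:ℕ) < (j:ℕ) := hj
      exact ⟨(j:ℕ)-(c:ℕ)-1, by omega, by omega⟩
    · rintro ⟨k, hk, rfl⟩
      have hcN := c.isLt
      exact ⟨⟨k+(c:ℕ)+1, by omega⟩, by simp only [Fin.lt_def]; omega, rfl⟩
  have := congrArg (fun s => ∏ m ∈ s, g m) h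
  rw [Finset.prod_image (fun a _ b _ h => Fin.val_injective h)] at this
  rw [Finset.prod_image (by intro a _ b _ h; simp only at h; omega)] at this
  exact this




/-- from nonconstant nonincreasing, get an adjacent drop -/
lemma exists_drop {N : ℕ} {l : Fin N → ℤ} (hl : Noninc l)
    (hnc : ¬ (∀ i j : Fin N, l i = l j)) :
    ∃ c : Fin N, ∃ hc : 0 < (c:ℕ), l c < l ⟨(c:ℕ)-1, by omega⟩ := by
  by_contra h
  push_neg at h
  apply hnc
  have key : ∀ (k : ℕ) (hk : k < N), l ⟨k, hk⟩ = l ⟨0, by omega⟩ := by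
    intro k
    induction k with
    | zero => intro hk; rfl
    | succ n ih =>
      intro hk
      have h1 : l ⟨n, by omega⟩ ≤ l ⟨n+1, hk⟩ := by
        have := h ⟨n+1, hk⟩ (by simp)
        simpa using this
      have h2 : l ⟨n+1, hk⟩ ≤ l ⟨n, by omega⟩ :=
        hl ⟨n, by omega⟩ ⟨n+1, hk⟩ (by simp [Fin.le_def])
      rw [le_antisymm h2 h1, ih (by omega)]
  intro i j
  rw [← Fin.eta i i.isLt, ← Fin.eta j j.isLt, key i i.isLt, key j j.isLt]

lemma weylDim_ge_N {N : ℕ} {l : Fin N → ℤ} (hl : Noninc l)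
    (hnc : ¬ (∀ i j : Fin N, l i = l j)) : (N:ℚ) ≤ weylDim N l := by
  obtain ⟨c, hc, hdrop⟩ := exists_drop hl hnc
  set d : Fin N := ⟨(c:ℕ)-1, by omega⟩ with hd
  have hdc : (d:ℕ) + 1 = (c:ℕ) := by simp only [hd]; omega
  set A : Finset (Fin N × Fin N) := (Finset.Iio c).image (fun i => (i, c)) with hA
  set B : Finset (Fin N × Fin N) := (Finset.Ioi c).image (fun j => (d, j)) with hB
  have hAmem : ∀ p ∈ A, p.2 = c ∧ p.1 < c := by
    intro p hp
    simp only [hA, Finset.mem_image, Finset.mem_Iio] at hp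
    obtain ⟨i, hi, rfl⟩ := hp
    exact ⟨rfl, hi⟩
  have hBmem : ∀ p ∈ B, p.1 = d ∧ c < p.2 := by
    intro p hp
    simp only [hB, Finset.mem_image, Finset.mem_Ioi] at hp
    obtain ⟨j, hj, rfl⟩ := hp
    exact ⟨rfl, hj⟩
  have hdisj : Disjoint A B := by
    rw [Finset.disjoint_left]
    intro p hpA hpB
    have h1 := (hAmem p hpA).1
    have h2 := (hBmem p hpB).2
    rw [h1] at h2; exact lt_irrefl _ h2
  have hsub : A ∪ B ⊆ Finset.univ.filter (fun p : Fin N × Fin N => p.1 < p.2) := by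
    intro p hp
    simp only [Finset.mem_filter, Finset.mem_univ, true_and]
    rcases Finset.mem_union.mp hp with h | h
    · obtain ⟨h1, h2⟩ := hAmem p h
      exact lt_of_lt_of_le h2 (le_of_eq h1.symm)
    · obtain ⟨h1, h2⟩ := hBmem p h
      have hdlt : d < c := by rw [Fin.lt_def]; omega
      rw [h1]; exact lt_trans hdlt h2
  -- product over A
  have hprodA : ((c:ℕ):ℚ) + 1 ≤ ∏ p ∈ A, fac l p := by
    rw [hA, Finset.prod_image (by intro a _ b _ h; exact ((Prod.mk.injEq _ _ _ _).mp h).1)]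
    have key : ∀ i ∈ Finset.Iio c,
        (((c:ℕ):ℚ)-((i:ℕ):ℚ)+1)/(((c:ℕ):ℚ)-((i:ℕ):ℚ)) ≤ fac l (i, c) := by
      intro i hi
      have hic : i < c := Finset.mem_Iio.mp hi
      have hicn : ((i:ℕ):ℚ) < ((c:ℕ):ℚ) := by exact_mod_cast hic
      have hgap : (l c : ℚ) + 1 ≤ l i := by
        have h1 : l c + 1 ≤ l d := hdrop
        have h2 : l d ≤ l i := hl i d (by rw [Fin.le_def]; omega)
        exact_mod_cast le_trans h1 h2
      rw [fac, div_le_div_iff₀ (by linarith) (by linarith)]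
      nlinarith [sub_pos.mpr hicn]
    calc ((c:ℕ):ℚ) + 1
        = ∏ k ∈ Finset.range (c:ℕ), ((((c:ℕ)):ℚ)-(k:ℚ)+1)/((((c:ℕ)):ℚ)-(k:ℚ)) :=
          (prod_tel1' (c:ℕ)).symm
      _ = ∏ i ∈ Finset.Iio c, ((((c:ℕ)):ℚ)-((i:ℕ):ℚ)+1)/((((c:ℕ)):ℚ)-((i:ℕ):ℚ)) :=
          (prod_Iio_eq_range c (fun k => (((c:ℕ):ℚ)-(k:ℚ)+1)/(((c:ℕ):ℚ)-(k:ℚ)))).symm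
      _ ≤ _ := Finset.prod_le_prod (by
            intro i hi
            have hic : i < c := Finset.mem_Iio.mp hi
            have h2 : ((i:ℕ):ℚ) < ((c:ℕ):ℚ) := by exact_mod_cast hic
            apply div_nonneg <;> linarith) key
  -- product over B
  have hprodB : ((N-1-(c:ℕ) : ℕ):ℚ)/2 + 1 ≤ ∏ p ∈ B, fac l p := by
    rw [hB, Finset.prod_image (by intro a _ b _ h; exact ((Prod.mk.injEq _ _ _ _).mp h).2)]
    have key : ∀ j ∈ Finset.Ioi c,
        (((j:ℕ):ℚ)-((d:ℕ):ℚ)+1)/(((j:ℕ):ℚ)-((d:ℕ):ℚ)) ≤ fac l (d, j) := by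
      intro j hj
      have hcj : c < j := Finset.mem_Ioi.mp hj
      have hdjn : ((d:ℕ):ℚ) < ((j:ℕ):ℚ) := by
        have : (d:ℕ) < (j:ℕ) := by have := (Fin.lt_def.mp hcj); omega
        exact_mod_cast this
      have hgap : (l j : ℚ) + 1 ≤ l d := by
        have h2 : l j ≤ l c := hl c j hcj.le
        have h1 : l c + 1 ≤ l d := hdrop
        exact_mod_cast le_trans (by omega : l j + 1 ≤ l c + 1) h1
      rw [fac, div_le_div_iff₀ (by linarith) (by linarith)]
      nlinarith [sub_pos.mpr hdjn]
    calc ((N-1-(c:ℕ) : ℕ):ℚ)/2 + 1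
        = (((N-1-(c:ℕ) : ℕ):ℚ) + 2)/2 := by ring
      _ = ∏ k ∈ Finset.range (N-1-(c:ℕ)), ((k:ℚ)+3)/((k:ℚ)+2) := (prod_tel2 _).symm
      _ = ∏ k ∈ Finset.range (N-1-(c:ℕ)),
            (((k+(c:ℕ)+1 : ℕ):ℚ)-((d:ℕ):ℚ)+1)/(((k+(c:ℕ)+1 : ℕ):ℚ)-((d:ℕ):ℚ)) := by
          apply Finset.prod_congr rfl
          intro k _
          have hdv : ((d:ℕ):ℚ) = ((c:ℕ):ℚ) - 1 := by
            have h0 : (d:ℕ) = (c:ℕ)-1 := rfl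
            rw [h0, Nat.cast_sub (by omega)]
            norm_num
          push_cast [hdv]
          ring_nf
      _ = ∏ j ∈ Finset.Ioi c, (((j:ℕ):ℚ)-((d:ℕ):ℚ)+1)/(((j:ℕ):ℚ)-((d:ℕ):ℚ)) :=
          (prod_Ioi_eq_range c (fun m => ((m:ℚ)-((d:ℕ):ℚ)+1)/((m:ℚ)-((d:ℕ):ℚ)))).symm
      _ ≤ _ := Finset.prod_le_prod (by
            intro j hj
            have hcj : c < j := Finset.mem_Ioi.mp hj
            have h2 : ((d:ℕ):ℚ) < ((j:ℕ):ℚ) := by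
              have := Fin.lt_def.mp hcj
              exact_mod_cast (by omega : (d:ℕ) < (j:ℕ))
            apply div_nonneg <;> linarith) key
  -- combine
  have hunion : (((c:ℕ):ℚ) + 1) * (((N-1-(c:ℕ) : ℕ):ℚ)/2 + 1) ≤ ∏ p ∈ A ∪ B, fac l p := by
    rw [Finset.prod_union hdisj]
    have hA0 : (0:ℚ) ≤ ((c:ℕ):ℚ) + 1 := by positivity
    have hB0 : (0:ℚ) ≤ ((N-1-(c:ℕ) : ℕ):ℚ)/2 + 1 := by positivity
    exact mul_le_mul hprodA hprodB hB0 (le_trans hA0 hprodA)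
  have hrest : (1:ℚ) ≤ ∏ p ∈ (Finset.univ.filter (fun p : Fin N × Fin N => p.1 < p.2)) \ (A ∪ B),
      fac l p := by
    calc (1:ℚ) = ∏ _p ∈ (Finset.univ.filter (fun p : Fin N × Fin N => p.1 < p.2)) \ (A ∪ B),
        (1:ℚ) := by simp
    _ ≤ _ := Finset.prod_le_prod (by intro i _; norm_num) (by
        intro p hp
        have := Finset.mem_sdiff.mp hp
        exact fac_ge_one hl (Finset.mem_filter.mp this.1).2)
  have hfinal : (N:ℚ) ≤ (((c:ℕ):ℚ) + 1) * (((N-1-(c:ℕ) : ℕ):ℚ)/2 + 1) := by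
    have h1 : 1 ≤ (c:ℕ) := hc
    have h2 : (c:ℕ) < N := c.isLt
    have e : ((N-1-(c:ℕ) : ℕ):ℚ) = (N:ℚ) - 1 - ((c:ℕ):ℚ) := by
      rw [Nat.cast_sub (by omega), Nat.cast_sub (by omega)]
      norm_num
    rw [e]
    have hcQ : (1:ℚ) ≤ ((c:ℕ):ℚ) := by exact_mod_cast h1
    have hcQ2 : ((c:ℕ):ℚ) ≤ (N:ℚ) - 1 := by
      have h4 : (c:ℕ) ≤ N - 1 := by omega
      have h3 : ((c:ℕ):ℚ) ≤ ((N-1:ℕ):ℚ) := by exact_mod_cast h4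
      rwa [Nat.cast_sub (by omega), Nat.cast_one] at h3
    nlinarith [mul_nonneg (sub_nonneg.mpr hcQ) (sub_nonneg.mpr hcQ2)]
  rw [weylDim_eq, ← Finset.prod_sdiff hsub]
  calc (N:ℚ) ≤ (((c:ℕ):ℚ) + 1) * (((N-1-(c:ℕ) : ℕ):ℚ)/2 + 1) := hfinal
  _ ≤ ∏ p ∈ A ∪ B, fac l p := hunion
  _ ≤ (∏ p ∈ (Finset.univ.filter (fun p : Fin N × Fin N => p.1 < p.2)) \ (A ∪ B), fac l p) *
      ∏ p ∈ A ∪ B, fac l p := by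
      apply le_mul_of_one_le_left ?_ hrest
      calc (0:ℚ) ≤ (((c:ℕ):ℚ) + 1) * (((N-1-(c:ℕ) : ℕ):ℚ)/2 + 1) := by positivity
      _ ≤ _ := hunion



variable {N : ℕ}

def LQ (l : Fin N → ℤ) : ℕ → ℚ := fun k => if h : k < N then ((l ⟨k,h⟩ : ℤ):ℚ) else 0

def gapN (l : Fin N → ℤ) : ℕ → ℚ := fun r => if r+1 < N then LQ l r - LQ l (r+1) else 0

lemma LQ_eq (l : Fin N → ℤ) (i : Fin N) : (l i : ℚ) = LQ l (i:ℕ) := by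
  unfold LQ; rw [dif_pos i.isLt]

lemma gapN_nonneg {l : Fin N → ℤ} (hl : Noninc l) (r : ℕ) : 0 ≤ gapN l r := by
  unfold gapN
  split
  · rename_i h
    unfold LQ
    rw [dif_pos (by omega : r < N), dif_pos h]
    have := hl ⟨r, by omega⟩ ⟨r+1, h⟩ (by simp [Fin.le_def])
    simp only [sub_nonneg]
    exact_mod_cast this
  · exact le_refl 0

lemma tele (l : Fin N → ℤ) {a b : ℕ} (hab : a ≤ b) (hb : b < N) :
    LQ l a - LQ l b = ∑ r ∈ Finset.Ico a b, gapN l r := by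
  have h1 : ∀ r ∈ Finset.Ico a b, gapN l r = LQ l r - LQ l (r+1) := by
    intro r hr
    have := Finset.mem_Ico.mp hr
    unfold gapN
    rw [if_pos (by omega)]
  rw [Finset.sum_congr rfl h1, Finset.sum_Ico_eq_sum_range]
  have h2 := Finset.sum_range_sub' (fun i => LQ l (a + i)) (b - a)
  simp only [Nat.add_zero, Nat.add_sub_cancel' hab] at h2
  rw [← h2]
  apply Finset.sum_congr rfl
  intro x _
  rw [Nat.add_succ]

lemma filter_le_eq (N r : ℕ) (h : r < N) :
    (Finset.range N).filter (fun a => a ≤ r) = Finset.range (r+1) := by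
  ext k; simp only [Finset.mem_filter, Finset.mem_range]; omega

lemma filter_gt_eq (N r : ℕ) :
    (Finset.range N).filter (fun b => r < b) = Finset.Ico (r+1) N := by
  ext k; simp only [Finset.mem_filter, Finset.mem_range, Finset.mem_Ico]; omega

lemma ico_to_ind (l : Fin N → ℤ) {a b : ℕ} (hb : b < N) :
    ∑ r ∈ Finset.Ico a b, gapN l r
      = ∑ r ∈ Finset.range (N-1), (if a ≤ r ∧ r < b then gapN l r else 0) := by
  have hsub : Finset.Ico a b ⊆ Finset.range (N-1) := by
    intro r hr
    have := Finset.mem_Ico.mp hr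
    simp only [Finset.mem_range]
    omega
  calc ∑ r ∈ Finset.Ico a b, gapN l r
      = ∑ r ∈ Finset.range (N-1) ∩ Finset.Ico a b, gapN l r := by
        rw [Finset.inter_eq_right.mpr hsub]
    _ = ∑ r ∈ Finset.range (N-1), (if r ∈ Finset.Ico a b then gapN l r else 0) := by
        rw [← Finset.sum_filter, Finset.filter_mem_eq_inter]
    _ = _ := Finset.sum_congr rfl (fun r _ => by simp [Finset.mem_Ico])

/-- double counting: the pair sum as a weighted sum of gaps -/
lemma pair_sum (l : Fin N → ℤ) :
    ∑ p ∈ Finset.univ.filter (fun p : Fin N × Fin N => p.1 < p.2), ((l p.1 : ℚ) - (l p.2 : ℚ))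
      = ∑ r ∈ Finset.range (N-1), (((r+1)*(N-1-r) : ℕ):ℚ) * gapN l r := by
  rw [Finset.sum_filter, Fintype.sum_prod_type]
  simp only [LQ_eq l, Fin.lt_def]
  have conv1 : ∀ i : Fin N,
      (∑ j : Fin N, if (i:ℕ) < (j:ℕ) then LQ l (i:ℕ) - LQ l (j:ℕ) else 0)
      = ∑ b ∈ Finset.range N, (if (i:ℕ) < b then LQ l (i:ℕ) - LQ l b else 0) :=
    fun i => Fin.sum_univ_eq_sum_range (fun b => if (i:ℕ) < b then LQ l (i:ℕ) - LQ l b else 0) N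
  rw [Finset.sum_congr rfl (fun i _ => conv1 i),
    Fin.sum_univ_eq_sum_range
      (fun a => ∑ b ∈ Finset.range N, (if a < b then LQ l a - LQ l b else 0)) N]
  have step2 : ∀ a ∈ Finset.range N, ∀ b ∈ Finset.range N,
      (if a < b then LQ l a - LQ l b else 0)
        = ∑ r ∈ Finset.range (N-1), (if a ≤ r ∧ r < b then gapN l r else 0) := by
    intro a ha b hb
    rw [Finset.mem_range] at ha hb
    by_cases hab : a < b
    · rw [if_pos hab, tele l hab.le hb, ico_to_ind l hb]
    · rw [if_neg hab]
      symm
      apply Finset.sum_eq_zero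
      intro r _
      rw [if_neg (by omega)]
  rw [Finset.sum_congr rfl (fun a ha => Finset.sum_congr rfl (fun b hb => step2 a ha b hb))]
  rw [Finset.sum_congr rfl (fun a _ => Finset.sum_comm), Finset.sum_comm]
  apply Finset.sum_congr rfl
  intro r hr
  rw [Finset.mem_range] at hr
  have inner : ∀ a ∈ Finset.range N,
      (∑ b ∈ Finset.range N, if a ≤ r ∧ r < b then gapN l r else 0)
        = (if a ≤ r then ((N-1-r:ℕ):ℚ) * gapN l r else 0) := by
    intro a _
    by_cases har : a ≤ r
    · simp only [har, true_and, if_pos]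
      rw [← Finset.sum_filter, filter_gt_eq, Finset.sum_const, Nat.card_Ico]
      rw [nsmul_eq_mul]
      congr 1
      norm_cast
      omega
    · simp only [har, false_and, if_false, Finset.sum_const_zero, if_neg har]
  rw [Finset.sum_congr rfl inner, ← Finset.sum_filter, filter_le_eq N r (by omega),
    Finset.sum_const, Finset.card_range, nsmul_eq_mul]
  push_cast [Nat.sub_sub]
  ring

/-- double counting: sum of deviations from the last entry -/
lemma mu_sum (l : Fin N → ℤ) (hN : 0 < N) :
    ∑ i : Fin N, ((l i : ℚ) - LQ l (N-1))
      = ∑ r ∈ Finset.range (N-1), ((r+1:ℕ):ℚ) * gapN l r := by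
  simp only [LQ_eq l]
  rw [Fin.sum_univ_eq_sum_range (fun a => LQ l a - LQ l (N-1)) N]
  have step : ∀ a ∈ Finset.range N,
      LQ l a - LQ l (N-1)
        = ∑ r ∈ Finset.range (N-1), (if a ≤ r ∧ r < N-1 then gapN l r else 0) := by
    intro a ha
    rw [Finset.mem_range] at ha
    rcases Nat.lt_or_ge a (N-1) with h | h
    · rw [tele l h.le (by omega), ico_to_ind l (by omega)]
    · have : a = N-1 := by omega
      rw [this, sub_self]
      symm
      apply Finset.sum_eq_zero
      intro r hr
      rw [Finset.mem_range] at hr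
      rw [if_neg (by omega)]
  rw [Finset.sum_congr rfl step, Finset.sum_comm]
  apply Finset.sum_congr rfl
  intro r hr
  rw [Finset.mem_range] at hr
  have : ∀ a ∈ Finset.range N, (if a ≤ r ∧ r < N-1 then gapN l r else 0)
      = (if a ≤ r then gapN l r else 0) := by
    intro a _
    by_cases har : a ≤ r
    · simp [har, hr]
    · simp [har]
  rw [Finset.sum_congr rfl this, ← Finset.sum_filter, filter_le_eq N r (by omega),
    Finset.sum_const, Finset.card_range, nsmul_eq_mul]



variable {N : ℕ}


/-- the gap vector of a tuple -/
def gaps (l : Fin N → ℤ) : Fin N → ℕ :=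
  fun r => if h : (r:ℕ)+1 < N then (l r - l ⟨(r:ℕ)+1, h⟩).toNat else 0

def sigQ (N : ℕ) (G : Fin N → ℕ) : ℚ :=
  ((∑ r : Fin N, ((r:ℕ)+1) * G r : ℕ) : ℚ) / (N:ℚ)

def wQ (N : ℕ) (r : ℕ) : ℚ := ((min (r+1) (N-1-r) : ℕ):ℚ)/2

lemma gaps_cast {l : Fin N → ℤ} (hl : Noninc l) (r : Fin N) :
    ((gaps l r : ℕ):ℚ) = gapN l (r:ℕ) := by
  unfold gaps gapN
  by_cases h : (r:ℕ)+1 < N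
  · rw [dif_pos h, if_pos h]
    have hle : l ⟨(r:ℕ)+1, h⟩ ≤ l r := hl r ⟨(r:ℕ)+1, h⟩ (by simp [Fin.le_def])
    have h0 : (0:ℤ) ≤ l r - l ⟨(r:ℕ)+1, h⟩ := by omega
    rw [show (((l r - l ⟨(r:ℕ)+1, h⟩).toNat : ℕ):ℚ) = ((l r : ℤ):ℚ) - ((l ⟨(r:ℕ)+1,h⟩ : ℤ):ℚ)
      from by exact_mod_cast congrArg (fun z : ℤ => (z:ℚ)) (Int.toNat_of_nonneg h0)]
    unfold LQ
    rw [dif_pos (show (r:ℕ) < N by omega), dif_pos h]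
  · rw [dif_neg h, if_neg h]
    simp

lemma sum_fin_gaps {l : Fin N → ℤ} (hl : Noninc l) (hN : 0 < N) (φ : ℕ → ℚ) :
    ∑ r : Fin N, φ (r:ℕ) * ((gaps l r : ℕ):ℚ) = ∑ k ∈ Finset.range (N-1), φ k * gapN l k := by
  have h1 : ∀ r : Fin N, φ (r:ℕ) * ((gaps l r : ℕ):ℚ) = φ (r:ℕ) * gapN l (r:ℕ) :=
    fun r => by rw [gaps_cast hl]
  rw [Finset.sum_congr rfl (fun r _ => h1 r),
    Fin.sum_univ_eq_sum_range (fun k => φ k * gapN l k) N]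
  have h2 : Finset.range N = Finset.range ((N-1)+1) := by
    congr 1
    omega
  have h3 : gapN l (N-1) = 0 := by
    unfold gapN
    rw [if_neg (by omega)]
  rw [h2, Finset.sum_range_succ, h3, mul_zero, add_zero]

lemma coeff_ineq (hN : 0 < N) (k : ℕ) (hk : k < N-1) :
    (N:ℚ) * wQ N k ≤ (((k+1)*(N-1-k) : ℕ):ℚ) := by
  unfold wQ
  have hx : ((k+1:ℕ):ℚ) + ((N-1-k:ℕ):ℚ) = (N:ℚ) := by
    have : (k+1) + (N-1-k) = N := by omega
    exact_mod_cast congrArg (Nat.cast : ℕ → ℚ) this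
  push_cast [Nat.cast_min] at *
  set x : ℚ := (k:ℚ)+1 with hxdef
  set y : ℚ := ((N-1-k : ℕ):ℚ) with hydef
  have hx0 : 0 < x := by positivity
  have hy0 : (0:ℚ) ≤ y := by rw [hydef]; positivity
  rcases le_total x y with h | h
  · rw [min_eq_left h]
    nlinarith
  · rw [min_eq_right h]
    nlinarith

/-- Main Casimir lower bound, in ℚ -/
lemma casimir_lower {l : Fin N → ℤ} (hN : 0 < N) (hl : Noninc l) :
    (LQ l (N-1) + sigQ N (gaps l))^2 + ∑ r : Fin N, wQ N (r:ℕ) * ((gaps l r : ℕ):ℚ)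
      ≤ casimir N l := by
  set m : ℚ := LQ l (N-1) with hm
  set S : ℚ := ∑ i : Fin N, ((l i : ℚ) - m) with hS
  have hNQ : (0:ℚ) < (N:ℚ) := by exact_mod_cast hN
  -- identify sigQ with S/N
  have hsig : sigQ N (gaps l) = S / N := by
    unfold sigQ
    congr 1
    push_cast
    rw [hS, mu_sum l hN,
      show ∑ r ∈ Finset.range (N-1), ((r+1:ℕ):ℚ) * gapN l r
          = ∑ r ∈ Finset.range (N-1), ((r:ℚ)+1) * gapN l r from
        Finset.sum_congr rfl (fun r _ => by push_cast; ring),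
      ← sum_fin_gaps hl hN (fun k => ((k:ℚ)+1))]
  -- gap sum comparison
  have hgapsum : (N:ℚ) * (∑ r : Fin N, wQ N (r:ℕ) * ((gaps l r : ℕ):ℚ))
      ≤ ∑ p ∈ Finset.univ.filter (fun p : Fin N × Fin N => p.1 < p.2),
          ((l p.1 : ℚ) - (l p.2 : ℚ)) := by
    rw [pair_sum l, sum_fin_gaps hl hN (wQ N), Finset.mul_sum]
    apply Finset.sum_le_sum
    intro k hk
    have hk' : k < N-1 := Finset.mem_range.mp hk
    rw [← mul_assoc]
    exact mul_le_mul_of_nonneg_right (coeff_ineq hN k hk') (gapN_nonneg hl k)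
  -- square sum comparison
  have hsqsum : (N:ℚ) * (m + S/N)^2 ≤ ∑ i : Fin N, ((l i : ℚ))^2 := by
    have hexp : ∀ i : Fin N, ((l i : ℚ))^2 = ((l i:ℚ) - m)^2 + 2*m*((l i:ℚ) - m) + m^2 :=
      fun i => by ring
    rw [Finset.sum_congr rfl (fun i _ => hexp i)]
    rw [Finset.sum_add_distrib, Finset.sum_add_distrib, ← Finset.mul_sum, ← hS,
      Finset.sum_const, Finset.card_univ, Fintype.card_fin, nsmul_eq_mul]
    have cheb : S^2 ≤ (N:ℚ) * ∑ i : Fin N, ((l i:ℚ) - m)^2 := by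
      have hc := sq_sum_le_card_mul_sum_sq (s := (Finset.univ : Finset (Fin N)))
        (f := fun i => (l i:ℚ) - m)
      rw [Finset.card_univ, Fintype.card_fin] at hc
      rw [hS]
      exact hc
    have expand : (N:ℚ) * (m + S/N)^2 = (N:ℚ)*m^2 + 2*m*S + S^2/N := by
      field_simp
      ring
    rw [expand]
    have h2 : S^2/N ≤ ∑ i : Fin N, ((l i:ℚ) - m)^2 := by
      rw [div_le_iff₀ hNQ]
      nlinarith [cheb]
    linarith
  -- combine
  unfold casimir
  rw [le_div_iff₀ hNQ]
  have goal_expand : ((LQ l (N-1) + sigQ N (gaps l))^2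
      + ∑ r : Fin N, wQ N (r:ℕ) * ((gaps l r : ℕ):ℚ)) * (N:ℚ)
      = (N:ℚ) * (m + S/N)^2 + (N:ℚ) * (∑ r : Fin N, wQ N (r:ℕ) * ((gaps l r : ℕ):ℚ)) := by
    rw [hsig, ← hm]
    ring
  rw [goal_expand]
  exact add_le_add hsqsum hgapsum



section qfacts
variable {q : ℝ} (hq0 : 0 < q) (hq1 : q < 1)

/-- bound a sum over ℤ by twice a sum over ℕ -/
lemma tsum_int_le_two_mul (f : ℤ → ℝ≥0∞) (g : ℕ → ℝ≥0∞)
    (h₁ : ∀ n : ℕ, f n ≤ g n) (h₂ : ∀ n : ℕ, f (-(n:ℤ)) ≤ g n) :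
    ∑' k : ℤ, f k ≤ 2 * ∑' n : ℕ, g n := by
  set φ : ℕ × Bool → ℤ := fun p => if p.2 then (p.1 : ℤ) else -(p.1 : ℤ) with hφ
  have hsurj : Function.Surjective φ := by
    intro k
    rcases le_or_gt 0 k with h | h
    · exact ⟨(k.toNat, true), by simp [hφ, Int.toNat_of_nonneg h]⟩
    · exact ⟨(k.natAbs, false), by
        simp only [hφ, Bool.false_eq_true, if_false]
        omega⟩
  calc ∑' k : ℤ, f k ≤ ∑' p : ℕ × Bool, f (φ p) := ENNReal.tsum_le_tsum_comp_of_surjective hsurj f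
  _ = ∑' n : ℕ, ∑' b : Bool, f (φ (n, b)) := ENNReal.tsum_prod (f := fun n b => f (φ (n, b)))
  _ = ∑' n : ℕ, (f (-(n:ℤ)) + f (n:ℤ)) := by
      apply tsum_congr
      intro n
      rw [tsum_bool]
      simp [hφ]
  _ ≤ ∑' n : ℕ, (g n + g n) := by
      apply ENNReal.tsum_le_tsum
      intro n
      exact add_le_add (h₂ n) (h₁ n)
  _ = 2 * ∑' n : ℕ, g n := by
      rw [← ENNReal.tsum_mul_left]
      apply tsum_congr
      intro n
      ring

include hq0 hq1 in
lemma geom_nat_bound :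
    ∑' n : ℕ, ENNReal.ofReal (q ^ (n - 1)) ≤ (ENNReal.ofReal q)⁻¹ * (1 - ENNReal.ofReal q)⁻¹ := by
  set r := ENNReal.ofReal q with hr
  have hr0 : r ≠ 0 := by
    simp [hr, ENNReal.ofReal_eq_zero]
    linarith
  have hrt : r ≠ ⊤ := ENNReal.ofReal_ne_top
  have key : ∀ n : ℕ, ENNReal.ofReal (q ^ (n - 1)) ≤ r⁻¹ * r ^ n := by
    intro n
    rw [hr, ← ENNReal.ofReal_pow hq0.le]
    cases n with
    | zero =>
      simp only [Nat.zero_sub, pow_zero, ENNReal.ofReal_one]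
      rw [mul_one]
      exact ENNReal.one_le_inv.mpr (by
        rw [← ENNReal.ofReal_one]
        exact ENNReal.ofReal_le_ofReal hq1.le)
    | succ n =>
      rw [Nat.succ_sub_one, pow_succ, ENNReal.ofReal_mul (by positivity), ← hr]
      rw [show r⁻¹ * (ENNReal.ofReal (q^n) * r) = r⁻¹ * r * ENNReal.ofReal (q^n) from by ring,
        ENNReal.inv_mul_cancel hr0 hrt, one_mul]
  calc ∑' n : ℕ, ENNReal.ofReal (q ^ (n - 1)) ≤ ∑' n : ℕ, r⁻¹ * r ^ n :=
        ENNReal.tsum_le_tsum key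
  _ = r⁻¹ * ∑' n : ℕ, r ^ n := ENNReal.tsum_mul_left
  _ = r⁻¹ * (1 - r)⁻¹ := by rw [ENNReal.tsum_geometric]

/-- the master constant -/
noncomputable def Bq (q : ℝ) : ℝ≥0∞ := 2 * ((ENNReal.ofReal q)⁻¹ * (1 - ENNReal.ofReal q)⁻¹)

include hq0 hq1 in
lemma Bq_ne_top : Bq q ≠ ⊤ := by
  unfold Bq
  have h1 : (ENNReal.ofReal q)⁻¹ ≠ ⊤ := by
    rw [ENNReal.inv_ne_top]
    simp [ENNReal.ofReal_eq_zero]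
    linarith
  have h2 : (1 - ENNReal.ofReal q)⁻¹ ≠ ⊤ := by
    rw [ENNReal.inv_ne_top]
    intro hc
    rw [tsub_eq_zero_iff_le] at hc
    have : ENNReal.ofReal q < 1 := by
      rw [← ENNReal.ofReal_one]
      exact (ENNReal.ofReal_lt_ofReal_iff_of_nonneg hq0.le).mpr hq1
    exact absurd hc (not_le.mpr this)
  exact ENNReal.mul_ne_top (by norm_num) (ENNReal.mul_ne_top h1 h2)

include hq0 hq1 in
/-- uniform bound on shifted theta sums -/
lemma msum_le (s : ℝ) :
    ∑' m : ℤ, ENNReal.ofReal (q ^ (((m:ℝ) + s)^2)) ≤ Bq q := by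
  set n0 : ℤ := -(round s) with hn0
  set u : ℝ := (n0 : ℝ) + s with hu
  have hu2 : |u| ≤ 1/2 := by
    rw [hu, hn0]
    push_cast
    rw [show -(round s : ℝ) + s = s - round s by ring]
    exact abs_sub_round s
  have hshift := Equiv.tsum_eq (Equiv.addRight n0)
    (fun m : ℤ => ENNReal.ofReal (q ^ (((m:ℝ) + s)^2)))
  rw [← hshift]
  have key : ∀ k : ℤ, ENNReal.ofReal (q ^ ((((Equiv.addRight n0) k :ℤ):ℝ) + s)^2)
      ≤ ENNReal.ofReal (q ^ ((k.natAbs - 1 : ℕ) : ℕ)) := by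
    intro k
    apply ENNReal.ofReal_le_ofReal
    have habs : ((k.natAbs - 1 : ℕ) : ℝ) ≤ |((k:ℝ) + u)| := by
      rcases eq_or_ne k 0 with rfl | hk
      · simp
      · have hn : 1 ≤ k.natAbs := Int.natAbs_pos.mpr hk
        rw [Nat.cast_sub hn, Nat.cast_one]
        have h1 : |(k:ℝ)| = (k.natAbs : ℝ) := by
          rw [Nat.cast_natAbs, Int.cast_abs]
        have h2 : |(k:ℝ)| ≤ |(k:ℝ) + u| + |u| := by
          calc |(k:ℝ)| = |((k:ℝ) + u) + (-u)| := by ring_nf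
          _ ≤ |(k:ℝ) + u| + |(-u)| := abs_add_le _ _
          _ = |(k:ℝ) + u| + |u| := by rw [abs_neg]
        linarith [h1 ▸ h2]
    have hsq : (((k.natAbs - 1 : ℕ)^2 : ℕ) : ℝ) ≤ (((k:ℝ) + u))^2 := by
      push_cast
      calc ((k.natAbs - 1 : ℕ) : ℝ)^2 ≤ |((k:ℝ) + u)|^2 :=
            pow_le_pow_left₀ (by positivity) habs 2
      _ = ((k:ℝ) + u)^2 := sq_abs _
    calc q ^ ((((Equiv.addRight n0) k :ℤ):ℝ) + s)^2
        = q ^ (((k:ℝ) + u)^2) := by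
          congr 1
          rw [hu]
          push_cast [Equiv.coe_addRight]
          ring
      _ ≤ q ^ ((((k.natAbs - 1 : ℕ)^2 : ℕ)) : ℝ) :=
          Real.rpow_le_rpow_of_exponent_ge hq0 hq1.le hsq
      _ = q ^ ((k.natAbs - 1 : ℕ)^2 : ℕ) := Real.rpow_natCast q _
      _ ≤ q ^ ((k.natAbs - 1 : ℕ)) := by
          apply pow_le_pow_of_le_one hq0.le hq1.le
          nlinarith [Nat.zero_le (k.natAbs - 1)]
  calc ∑' k : ℤ, ENNReal.ofReal (q ^ ((((Equiv.addRight n0) k :ℤ):ℝ) + s)^2)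
      ≤ ∑' k : ℤ, ENNReal.ofReal (q ^ ((k.natAbs - 1 : ℕ) : ℕ)) := ENNReal.tsum_le_tsum key
  _ ≤ 2 * ∑' n : ℕ, ENNReal.ofReal (q ^ (n - 1)) := by
      apply tsum_int_le_two_mul
      · intro n; simp
      · intro n; simp
  _ ≤ Bq q := by
      unfold Bq
      exact mul_le_mul_right (geom_nat_bound hq0 hq1) 2

end qfacts


/-- the summand of `ZUN` -/
noncomputable def term (g : ℕ) (t : ℝ) {N : ℕ} (l : Fin N → ℤ) : ℝ≥0∞ :=
  ENNReal.ofReal (Real.exp (-(t / 2)) ^ ((casimir N l : ℝ)) *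
    (weylDim N l : ℝ) ^ (2 - 2 * (g : ℤ)))

section qq
variable {q : ℝ} (hq0 : 0 < q) (hq1 : q < 1)

include hq0 hq1 in
lemma thetaE_le_Bq : thetaE q ≤ Bq q := by
  unfold thetaE Bq
  have key : ∀ k : ℤ, ENNReal.ofReal (q ^ (k.natAbs ^ 2)) ≤ ENNReal.ofReal (q ^ (k.natAbs - 1)) := by
    intro k
    apply ENNReal.ofReal_le_ofReal
    apply pow_le_pow_of_le_one hq0.le hq1.le
    nlinarith [Nat.zero_le (k.natAbs - 1), Nat.sub_le k.natAbs 1, sq_nonneg (k.natAbs - 1)]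
  calc ∑' k : ℤ, ENNReal.ofReal (q ^ (k.natAbs ^ 2))
      ≤ 2 * ∑' n : ℕ, ENNReal.ofReal (q ^ (n - 1)) := by
        apply tsum_int_le_two_mul _ (fun n => ENNReal.ofReal (q ^ (n - 1)))
        · intro n
          simpa using key (n : ℤ)
        · intro n
          simpa using key (-(n:ℤ))
  _ ≤ _ := mul_le_mul_right (geom_nat_bound hq0 hq1) 2

end qq

/-- the subtype of nonincreasing tuples -/
abbrev T (N : ℕ) := {l : Fin N → ℤ // ∀ i j : Fin N, i ≤ j → l j ≤ l i}

/-- the set of constant tuples inside T N -/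
def constSet (N : ℕ) : Set (T N) := {x | ∀ i j : Fin N, x.1 i = x.1 j}

noncomputable def constEquiv (N : ℕ) (hN : 0 < N) : ℤ ≃ constSet N where
  toFun m := ⟨⟨fun _ => m, fun _ _ _ => le_refl m⟩, fun _ _ => rfl⟩
  invFun x := x.1.1 ⟨0, hN⟩
  left_inv m := rfl
  right_inv x := by
    apply Subtype.ext
    apply Subtype.ext
    funext i
    exact x.2 ⟨0, hN⟩ i

lemma casimir_const (N : ℕ) (hN : 0 < N) (m : ℤ) :
    casimir N (fun _ => m) = (m:ℚ)^2 := by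
  unfold casimir
  have h1 : ∑ i : Fin N, ((m:ℚ))^2 = (N:ℚ) * (m:ℚ)^2 := by
    rw [Finset.sum_const, Finset.card_univ, Fintype.card_fin, nsmul_eq_mul]
  have h2 : ∑ p ∈ Finset.univ.filter (fun p : Fin N × Fin N => p.1 < p.2),
      ((m:ℚ) - (m:ℚ)) = 0 := by
    apply Finset.sum_eq_zero
    intro p _
    ring
  have hN0 : (N:ℚ) ≠ 0 := by exact_mod_cast hN.ne'
  rw [h1, h2, add_zero, mul_comm, mul_div_assoc, div_self hN0, mul_one]

lemma weylDim_const (N : ℕ) (m : ℤ) : weylDim N (fun _ => m) = 1 := by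
  unfold weylDim
  apply Finset.prod_eq_one
  intro p hp
  have hp' : p.1 < p.2 := (Finset.mem_filter.mp hp).2
  have h2 : ((p.1 : ℕ) : ℚ) < ((p.2 : ℕ) : ℚ) := by exact_mod_cast hp'
  rw [show (m:ℚ) - (m:ℚ) + ((p.2:ℕ):ℚ) - ((p.1:ℕ):ℚ) = ((p.2:ℕ):ℚ) - ((p.1:ℕ):ℚ) from by ring]
  exact div_self (by linarith)

lemma term_const (g : ℕ) (t : ℝ) (N : ℕ) (hN : 0 < N) (m : ℤ) :
    term g t (N := N) (fun _ => m) = ENNReal.ofReal (Real.exp (-(t/2)) ^ (m.natAbs ^ 2)) := by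
  unfold term
  rw [casimir_const N hN m, weylDim_const N m]
  congr 1
  rw [Rat.cast_one, one_zpow, mul_one]
  rw [show (((m:ℚ)^2 : ℚ):ℝ) = ((m.natAbs ^ 2 : ℕ) : ℝ) from by
    push_cast
    rw [Nat.cast_natAbs, Int.cast_abs, sq_abs]]
  exact Real.rpow_natCast _ _

/-- the constant part sums to the theta function -/
lemma const_part (g : ℕ) (t : ℝ) (N : ℕ) (hN : 0 < N) :
    ∑' x : constSet N, term g t x.1.1 = thetaE (Real.exp (-(t/2))) := by
  rw [← Equiv.tsum_eq (constEquiv N hN) (fun x => term g t x.1.1)]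
  unfold thetaE
  apply tsum_congr
  intro m
  exact term_const g t N hN m



/-- factorization of a tsum over a finite product of ℕ's -/
lemma tsum_pi_prod : ∀ {n : ℕ} (w : Fin n → ℕ → ℝ≥0∞),
    ∑' G : Fin n → ℕ, ∏ r, w r (G r) = ∏ r, ∑' m : ℕ, w r m := by
  intro n
  induction n with
  | zero =>
    intro w
    rw [tsum_eq_single (fun _ => 0) (by
      intro G hG
      exfalso
      apply hG
      funext i
      exact absurd i.isLt (by omega))]
    simp
  | succ n ih =>
    intro w
    rw [← Equiv.tsum_eq (Fin.consEquiv (fun _ : Fin (n+1) => ℕ))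
      (fun G => ∏ r, w r (G r))]
    have step : ∀ p : ℕ × (Fin n → ℕ),
        (∏ r, w r (((Fin.consEquiv (fun _ : Fin (n+1) => ℕ)) p) r))
          = w 0 p.1 * ∏ r : Fin n, w r.succ (p.2 r) := by
      intro p
      rw [Fin.prod_univ_succ]
      simp [Fin.consEquiv]
    have hp : ∑' (b : ℕ × (Fin n → ℕ)), w 0 b.1 * ∏ r : Fin n, w r.succ (b.2 r)
        = ∑' a : ℕ, ∑' bb : Fin n → ℕ, w 0 a * ∏ r : Fin n, w r.succ (bb r) :=
      ENNReal.tsum_prod (f := fun (a : ℕ) (bb : Fin n → ℕ) => w 0 a * ∏ r : Fin n, w r.succ (bb r))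
    rw [tsum_congr step, hp]
    calc ∑' a : ℕ, ∑' b : Fin n → ℕ, w 0 a * ∏ r : Fin n, w r.succ (b r)
        = ∑' a : ℕ, w 0 a * ∑' b : Fin n → ℕ, ∏ r : Fin n, w r.succ (b r) := by
          apply tsum_congr
          intro a
          rw [ENNReal.tsum_mul_left]
      _ = (∑' a : ℕ, w 0 a) * ∑' b : Fin n → ℕ, ∏ r : Fin n, w r.succ (b r) :=
          ENNReal.tsum_mul_right
      _ = (∑' a : ℕ, w 0 a) * ∏ r : Fin n, ∑' m, w r.succ m := by rw [ih]
      _ = _ := by rw [Fin.prod_univ_succ]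

section WGT
variable {q : ℝ} (hq0 : 0 < q) (hq1 : q < 1)

noncomputable def wgt (q : ℝ) (N : ℕ) (r : Fin N) (n : ℕ) : ℝ≥0∞ :=
  if (r:ℕ)+1 < N then ENNReal.ofReal (q ^ (((wQ N (r:ℕ) : ℚ):ℝ) * n)) else (if n = 0 then 1 else 0)

noncomputable def Kq (q : ℝ) : ℝ≥0∞ :=
  ENNReal.ofReal (Real.exp (2 / ((1 - q ^ ((2:ℝ))⁻¹) * (1 - q ^ ((2:ℝ))⁻¹))))

lemma Kq_ne_top (q : ℝ) : Kq q ≠ ⊤ := ENNReal.ofReal_ne_top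

include hq0 hq1 in
lemma prod_wgt_sum_le (N : ℕ) :
    ∏ r : Fin N, (∑' n : ℕ, wgt q N r n) ≤ Kq q := by
  set c : ℝ := q ^ ((2:ℝ))⁻¹ with hc
  have hc0 : 0 < c := Real.rpow_pos_of_pos hq0 _
  have hc1 : c < 1 := Real.rpow_lt_one hq0.le hq1 (by norm_num)
  have h1c : 0 < 1 - c := by linarith
  set z : Fin N → ℝ := fun r => q ^ ((((r:ℕ)+1 : ℕ):ℝ)/2) + q ^ (((N-1-(r:ℕ) : ℕ):ℝ)/2) with hz
  have hz0 : ∀ r : Fin N, 0 ≤ z r := by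
    intro r
    have h1 := Real.rpow_nonneg hq0.le ((((r:ℕ)+1 : ℕ):ℝ)/2)
    have h2 := Real.rpow_nonneg hq0.le (((N-1-(r:ℕ) : ℕ):ℝ)/2)
    simp only [hz]
    linarith
  -- per-factor bound
  have per : ∀ r : Fin N, (∑' n : ℕ, wgt q N r n) ≤ ENNReal.ofReal (Real.exp (z r / (1-c))) := by
    intro r
    by_cases hr : (r:ℕ)+1 < N
    · set a : ℝ := ((wQ N (r:ℕ) : ℚ):ℝ) with ha
      have haval : a = ((min ((r:ℕ)+1) (N-1-(r:ℕ)) : ℕ):ℝ)/2 := by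
        rw [ha]; unfold wQ; push_cast; ring
      have hmin1 : 1 ≤ min ((r:ℕ)+1) (N-1-(r:ℕ)) := by
        apply le_min <;> omega
      have ha_half : (2:ℝ)⁻¹ ≤ a := by
        rw [haval]
        have h5 : (1:ℝ) ≤ ((min ((r:ℕ)+1) (N-1-(r:ℕ)) : ℕ):ℝ) := by exact_mod_cast hmin1
        linarith
      set x : ℝ := q ^ a with hx
      have hx0 : 0 < x := Real.rpow_pos_of_pos hq0 _
      have hxc : x ≤ c := by
        rw [hx, hc]
        exact Real.rpow_le_rpow_of_exponent_ge hq0 hq1.le ha_half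
      have hxz : x ≤ z r := by
        rcases le_total ((r:ℕ)+1) (N-1-(r:ℕ)) with h | h
        · have hv : a = (((r:ℕ)+1 : ℕ):ℝ)/2 := by rw [haval, min_eq_left h]
          have h2 := Real.rpow_nonneg hq0.le (((N-1-(r:ℕ) : ℕ):ℝ)/2)
          rw [hx, hv]
          simp only [hz]
          linarith
        · have hv : a = ((N-1-(r:ℕ) : ℕ):ℝ)/2 := by rw [haval, min_eq_right h]
          have h2 := Real.rpow_nonneg hq0.le ((((r:ℕ)+1 : ℕ):ℝ)/2)
          rw [hx, hv]
          simp only [hz]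
          linarith
      have hsum : (∑' n : ℕ, wgt q N r n) = (1 - ENNReal.ofReal x)⁻¹ := by
        have hterm : ∀ n : ℕ, wgt q N r n = (ENNReal.ofReal x) ^ n := by
          intro n
          unfold wgt
          rw [if_pos hr, ← ENNReal.ofReal_pow hx0.le]
          congr 1
          rw [← ha, hx, ← Real.rpow_natCast (q ^ a) n, ← Real.rpow_mul hq0.le]
        rw [tsum_congr hterm, ENNReal.tsum_geometric]
      rw [hsum]
      have hofreal : (1 - ENNReal.ofReal x)⁻¹ = ENNReal.ofReal ((1-x)⁻¹) := by
        rw [ENNReal.ofReal_inv_of_pos (show (0:ℝ) < 1-x by linarith),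
          ENNReal.ofReal_sub 1 hx0.le, ENNReal.ofReal_one]
      rw [hofreal]
      apply ENNReal.ofReal_le_ofReal
      have hineq : (1-x)⁻¹ ≤ 1 + x/(1-c) := by
        rw [inv_le_iff_one_le_mul₀ (by linarith : (0:ℝ) < 1 - x)]
        have expand : (1 + x/(1-c)) * (1-x) = 1 - x + x*(1-x)/(1-c) := by
          field_simp
        rw [expand]
        have h4 : x ≤ x*(1-x)/(1-c) := by
          rw [le_div_iff₀ h1c]
          nlinarith
        linarith
      have hmono : x/(1-c) ≤ z r/(1-c) := by gcongr
      have hexp := Real.add_one_le_exp (z r/(1-c))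
      have hznn : 0 ≤ z r/(1-c) := div_nonneg (hz0 r) h1c.le
      linarith
    · have hterm : ∀ n : ℕ, wgt q N r n = if n = 0 then 1 else 0 := by
        intro n
        unfold wgt
        rw [if_neg hr]
      rw [tsum_congr hterm, tsum_eq_single 0 (by intro b hb; rw [if_neg hb]), if_pos rfl]
      rw [show (1:ℝ≥0∞) = ENNReal.ofReal (Real.exp 0) from by simp]
      apply ENNReal.ofReal_le_ofReal
      apply Real.exp_le_exp.mpr
      exact div_nonneg (hz0 r) h1c.le
  -- assemble
  have hgeom : ∀ n : ℕ, ∑ k ∈ Finset.range n, c^k ≤ 1/(1-c) := by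
    intro n
    rw [geom_sum_eq (by linarith : c ≠ 1) n,
      show (c^n - 1)/(c-1) = (1 - c^n)/(1-c) from by rw [← neg_div_neg_eq]; ring_nf]
    have hcn : 0 ≤ c^n := pow_nonneg hc0.le n
    gcongr
    linarith
  have hzsum : ∑ r : Fin N, z r ≤ 2/(1-c) := by
    have e1 : ∀ r : Fin N, q ^ ((((r:ℕ)+1 : ℕ):ℝ)/2) = c^((r:ℕ)+1) := by
      intro r
      rw [hc, ← Real.rpow_natCast (q ^ (2:ℝ)⁻¹) ((r:ℕ)+1), ← Real.rpow_mul hq0.le]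
      congr 1
      push_cast
      ring
    have e2 : ∀ r : Fin N, q ^ (((N-1-(r:ℕ) : ℕ):ℝ)/2) = c^(N-1-(r:ℕ)) := by
      intro r
      rw [hc, ← Real.rpow_natCast (q ^ (2:ℝ)⁻¹) (N-1-(r:ℕ)), ← Real.rpow_mul hq0.le]
      congr 1
      push_cast
      ring
    simp only [hz]
    rw [Finset.sum_add_distrib]
    have s1 : ∑ r : Fin N, q ^ ((((r:ℕ)+1 : ℕ):ℝ)/2) ≤ 1/(1-c) := by
      rw [Finset.sum_congr rfl (fun r _ => e1 r),
        Fin.sum_univ_eq_sum_range (fun k => c^(k+1)) N]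
      calc ∑ k ∈ Finset.range N, c^(k+1)
          ≤ ∑ k ∈ Finset.range N, c^k :=
            Finset.sum_le_sum (fun k _ => pow_le_pow_of_le_one hc0.le hc1.le (by omega))
        _ ≤ 1/(1-c) := hgeom N
    have s2 : ∑ r : Fin N, q ^ (((N-1-(r:ℕ) : ℕ):ℝ)/2) ≤ 1/(1-c) := by
      rw [Finset.sum_congr rfl (fun r _ => e2 r),
        Fin.sum_univ_eq_sum_range (fun k => c^(N-1-k)) N,
        Finset.sum_range_reflect (fun k => c^k) N]
      exact hgeom N
    have htwo : 1/(1-c) + 1/(1-c) = 2/(1-c) := by ring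
    linarith
  calc ∏ r : Fin N, (∑' n : ℕ, wgt q N r n)
      ≤ ∏ r : Fin N, ENNReal.ofReal (Real.exp (z r / (1-c))) := Finset.prod_le_prod' (fun i _ => per i)
    _ = ENNReal.ofReal (∏ r : Fin N, Real.exp (z r / (1-c))) :=
        (ENNReal.ofReal_prod_of_nonneg (fun r _ => (Real.exp_pos _).le)).symm
    _ = ENNReal.ofReal (Real.exp (∑ r : Fin N, z r / (1-c))) := by rw [Real.exp_sum]
    _ ≤ Kq q := by
        unfold Kq
        rw [← hc]
        apply ENNReal.ofReal_le_ofReal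
        apply Real.exp_le_exp.mpr
        rw [← Finset.sum_div,
          show (2:ℝ)/((1-c)*(1-c)) = (2/(1-c))/(1-c) from by rw [div_div]]
        gcongr

end WGT


variable {N : ℕ}


/-- reconstruction of a nonincreasing tuple from its gaps and last value -/
lemma recon {n : ℕ} {l : Fin (n+1) → ℤ} (hl : Noninc l) (i : Fin (n+1)) :
    l i = l (Fin.last n) + ∑ r ∈ Finset.Ici i, (gaps l r : ℤ) := by
  induction i using Fin.reverseInduction with
  | last =>
    have h1 : Finset.Ici (Fin.last n) = {Fin.last n} := by
      ext j
      simp only [Finset.mem_Ici, Finset.mem_singleton]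
      constructor
      · intro h
        exact le_antisymm (Fin.le_last j) h
      · rintro rfl
        exact le_refl _
    have h2 : gaps l (Fin.last n) = 0 := by
      unfold gaps
      rw [dif_neg (by simp [Fin.val_last])]
    rw [h1, Finset.sum_singleton, h2]
    simp
  | cast i ih =>
    have hins : Finset.Ici (Fin.castSucc i) = insert (Fin.castSucc i) (Finset.Ici i.succ) := by
      ext j
      simp only [Finset.mem_Ici, Finset.mem_insert]
      constructor
      · intro h
        by_cases hj : (j:ℕ) = (i:ℕ)
        · left
          apply Fin.ext
          rw [Fin.coe_castSucc]
          exact hj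
        · right
          rw [Fin.le_def] at h ⊢
          rw [Fin.coe_castSucc] at h
          rw [Fin.val_succ]
          omega
      · intro h
        rcases h with rfl | h
        · exact le_refl _
        · rw [Fin.le_def] at h ⊢
          rw [Fin.coe_castSucc]
          rw [Fin.val_succ] at h
          omega
    have hnotmem : Fin.castSucc i ∉ Finset.Ici i.succ := by
      simp only [Finset.mem_Ici, Fin.le_def, Fin.val_succ, Fin.coe_castSucc]
      omega
    have hgap : (gaps l (Fin.castSucc i) : ℤ) = l (Fin.castSucc i) - l i.succ := by
      unfold gaps
      have hlt : ((Fin.castSucc i : Fin (n+1)):ℕ)+1 < n+1 := by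
        rw [Fin.coe_castSucc]
        omega
      rw [dif_pos hlt]
      have hidx : (⟨((Fin.castSucc i : Fin (n+1)):ℕ)+1, hlt⟩ : Fin (n+1)) = i.succ := by
        apply Fin.ext
        simp [Fin.coe_castSucc, Fin.val_succ]
      rw [hidx, Int.toNat_of_nonneg (by
        have := hl (Fin.castSucc i) i.succ (by
          rw [Fin.le_def, Fin.coe_castSucc, Fin.val_succ]
          omega)
        omega)]
    rw [hins, Finset.sum_insert hnotmem, hgap]
    linarith [ih]

def Phi {n : ℕ} : T (n+1) → (Fin (n+1) → ℕ) × ℤ := fun x => (gaps x.1, x.1 (Fin.last n))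

lemma Phi_inj {n : ℕ} : Function.Injective (Phi (n := n)) := by
  intro x y h
  have h1 : gaps x.1 = gaps y.1 := congrArg Prod.fst h
  have h2 : x.1 (Fin.last n) = y.1 (Fin.last n) := congrArg Prod.snd h
  apply Subtype.ext
  funext i
  rw [recon x.2 i, recon y.2 i, h1, h2]

lemma rpow_finset_sum {q : ℝ} (hq0 : 0 < q) {ι : Type*} (s : Finset ι) (f : ι → ℝ) :
    q ^ (∑ i ∈ s, f i) = ∏ i ∈ s, q ^ (f i) := by
  induction s using Finset.cons_induction with
  | empty => simp [Real.rpow_zero]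
  | cons a s ha ih => rw [Finset.sum_cons, Finset.prod_cons, Real.rpow_add hq0, ih]

noncomputable def HH (q : ℝ) (N : ℕ) : (Fin N → ℕ) × ℤ → ℝ≥0∞ := fun p =>
  ENNReal.ofReal (q ^ (((p.2:ℝ) + ((sigQ N p.1 : ℚ):ℝ))^2)) * ∏ r : Fin N, wgt q N r (p.1 r)

lemma term_q_le {q : ℝ} (hq0 : 0 < q) (hq1 : q < 1) {n : ℕ} (x : T (n+1)) :
    ENNReal.ofReal (q ^ ((casimir (n+1) x.1 : ℚ):ℝ)) ≤ HH q (n+1) (Phi x) := by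
  have hN : 0 < n+1 := by omega
  have hlow := casimir_lower (l := x.1) hN x.2
  have hLQ : LQ x.1 ((n+1)-1) = ((x.1 (Fin.last n) : ℤ):ℚ) := by
    unfold LQ
    rw [dif_pos (by omega : (n+1)-1 < n+1)]
    exact congrArg (fun z : ℤ => (z:ℚ)) (congrArg x.1 (Fin.ext (by simp)))
  have hfac : ∀ r : Fin (n+1),
      ENNReal.ofReal (q ^ (((wQ (n+1) (r:ℕ) : ℚ):ℝ) * ((gaps x.1 r : ℕ):ℝ)))
        = wgt q (n+1) r (gaps x.1 r) := by
    intro r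
    unfold wgt
    by_cases hr : (r:ℕ)+1 < n+1
    · rw [if_pos hr]
    · rw [if_neg hr]
      have h0 : gaps x.1 r = 0 := by unfold gaps; rw [dif_neg hr]
      rw [h0, if_pos rfl]
      norm_num
  calc ENNReal.ofReal (q ^ ((casimir (n+1) x.1 : ℚ):ℝ))
      ≤ ENNReal.ofReal (q ^ ((((LQ x.1 ((n+1)-1) + sigQ (n+1) (gaps x.1))^2
          + ∑ r : Fin (n+1), wQ (n+1) (r:ℕ) * ((gaps x.1 r : ℕ):ℚ) : ℚ)):ℝ)) := by
        apply ENNReal.ofReal_le_ofReal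
        apply Real.rpow_le_rpow_of_exponent_ge hq0 hq1.le
        exact_mod_cast hlow
    _ = ENNReal.ofReal ((q ^ ((((x.1 (Fin.last n) : ℤ):ℝ) + ((sigQ (n+1) (gaps x.1) : ℚ):ℝ))^2))
          * ∏ r : Fin (n+1), q ^ (((wQ (n+1) (r:ℕ) : ℚ):ℝ) * ((gaps x.1 r : ℕ):ℝ))) := by
        congr 1
        have hcast : ((((LQ x.1 ((n+1)-1) + sigQ (n+1) (gaps x.1))^2
            + ∑ r : Fin (n+1), wQ (n+1) (r:ℕ) * ((gaps x.1 r : ℕ):ℚ) : ℚ)):ℝ)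
            = ((((x.1 (Fin.last n) : ℤ):ℝ) + ((sigQ (n+1) (gaps x.1) : ℚ):ℝ))^2)
              + ∑ r : Fin (n+1), (((wQ (n+1) (r:ℕ) : ℚ):ℝ) * ((gaps x.1 r : ℕ):ℝ)) := by
          rw [hLQ]
          push_cast
          ring
        rw [hcast, Real.rpow_add hq0, rpow_finset_sum hq0]
    _ = ENNReal.ofReal (q ^ ((((x.1 (Fin.last n) : ℤ):ℝ) + ((sigQ (n+1) (gaps x.1) : ℚ):ℝ))^2))
          * ∏ r : Fin (n+1), ENNReal.ofReal (q ^ (((wQ (n+1) (r:ℕ) : ℚ):ℝ) * ((gaps x.1 r : ℕ):ℝ))) := by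
        rw [ENNReal.ofReal_mul (Real.rpow_nonneg hq0.le _),
          ENNReal.ofReal_prod_of_nonneg (fun r _ => Real.rpow_nonneg hq0.le _)]
    _ = HH q (n+1) (Phi x) := by
        unfold HH Phi
        rw [Finset.prod_congr rfl (fun r _ => hfac r)]

lemma tail_le {q : ℝ} (hq0 : 0 < q) (hq1 : q < 1) (n : ℕ) :
    ∑' x : T (n+1), ENNReal.ofReal (q ^ ((casimir (n+1) x.1 : ℚ):ℝ)) ≤ Bq q * Kq q := by
  calc ∑' x : T (n+1), ENNReal.ofReal (q ^ ((casimir (n+1) x.1 : ℚ):ℝ))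
      ≤ ∑' x : T (n+1), HH q (n+1) (Phi x) := ENNReal.tsum_le_tsum (fun x => term_q_le hq0 hq1 x)
    _ ≤ ∑' p : (Fin (n+1) → ℕ) × ℤ, HH q (n+1) p :=
        ENNReal.tsum_comp_le_tsum_of_injective Phi_inj _
    _ = ∑' G : Fin (n+1) → ℕ, ∑' m : ℤ, HH q (n+1) (G, m) := ENNReal.tsum_prod'
    _ ≤ ∑' G : Fin (n+1) → ℕ, Bq q * ∏ r : Fin (n+1), wgt q (n+1) r (G r) := by
        apply ENNReal.tsum_le_tsum
        intro G
        have hred : ∀ m : ℤ, HH q (n+1) (G, m)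
            = ENNReal.ofReal (q ^ (((m:ℝ) + ((sigQ (n+1) G : ℚ):ℝ))^2))
              * ∏ r : Fin (n+1), wgt q (n+1) r (G r) := fun m => rfl
        rw [tsum_congr hred, ENNReal.tsum_mul_right]
        exact mul_le_mul_left (msum_le hq0 hq1 _) _
    _ = Bq q * ∑' G : Fin (n+1) → ℕ, ∏ r : Fin (n+1), wgt q (n+1) r (G r) :=
        ENNReal.tsum_mul_left
    _ = Bq q * ∏ r : Fin (n+1), ∑' m : ℕ, wgt q (n+1) r m := by rw [tsum_pi_prod]
    _ ≤ Bq q * Kq q := mul_le_mul_right (prod_wgt_sum_le hq0 hq1 (n+1)) _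



section main
variable (g : ℕ) (hg : 2 ≤ g) (t : ℝ) (ht : 0 < t)

include hg ht in
lemma term_nonconst_le {N : ℕ} (x : T N) (hx : x ∈ (constSet N)ᶜ) :
    term g t x.1 ≤ ENNReal.ofReal (((N:ℝ)^2)⁻¹)
      * ENNReal.ofReal (Real.exp (-(t/2)) ^ ((casimir N x.1 : ℚ):ℝ)) := by
  set q : ℝ := Real.exp (-(t/2)) with hq
  have hnc : ¬ (∀ i j : Fin N, x.1 i = x.1 j) := hx
  have hNd : (N:ℚ) ≤ weylDim N x.1 := weylDim_ge_N x.2 hnc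
  have hN2 : 0 < N := by
    by_contra hcon
    push_neg at hcon
    apply hnc
    intro i j
    have : i = j := by
      apply Fin.ext
      have h1 := i.isLt
      have h2 := j.isLt
      omega
    rw [this]
  have h1d : (1:ℚ) ≤ weylDim N x.1 := one_le_weylDim x.2
  set d : ℝ := ((weylDim N x.1 : ℚ):ℝ) with hd
  have hd1 : (1:ℝ) ≤ d := by
    rw [hd]
    exact_mod_cast h1d
  have hdN : (N:ℝ) ≤ d := by
    rw [hd]
    exact_mod_cast hNd
  have hzpow : d ^ (2 - 2 * (g:ℤ)) ≤ ((N:ℝ)^2)⁻¹ := by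
    have hgz : (2:ℤ) ≤ (g:ℤ) := by exact_mod_cast hg
    have hle : (2 - 2 * (g:ℤ)) ≤ -2 := by omega
    calc d ^ (2 - 2 * (g:ℤ)) ≤ d ^ (-2:ℤ) := zpow_le_zpow_right₀ hd1 hle
    _ = (d^(2:ℕ))⁻¹ := by
        rw [show (-2:ℤ) = -((2:ℕ):ℤ) from by norm_num, zpow_neg, zpow_natCast]
    _ ≤ ((N:ℝ)^2)⁻¹ := by
        apply inv_anti₀ (by
          have : (0:ℝ) < (N:ℝ) := by exact_mod_cast hN2
          positivity)
        exact pow_le_pow_left₀ (by positivity) hdN 2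
  unfold term
  rw [ENNReal.ofReal_mul (Real.rpow_nonneg (Real.exp_pos _).le _)]
  rw [mul_comm]
  apply mul_le_mul_left
  exact ENNReal.ofReal_le_ofReal hzpow

include hg ht in
lemma ZUN_split (n : ℕ) :
    thetaE (Real.exp (-(t/2))) ≤ ZUN (n+1) g t ∧
    ZUN (n+1) g t ≤ thetaE (Real.exp (-(t/2)))
      + ENNReal.ofReal ((((n+1:ℕ):ℝ)^2)⁻¹) * (Bq (Real.exp (-(t/2))) * Kq (Real.exp (-(t/2)))) := by
  set q : ℝ := Real.exp (-(t/2)) with hq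
  have hq0 : 0 < q := Real.exp_pos _
  have hq1 : q < 1 := by
    rw [hq, show (1:ℝ) = Real.exp 0 from (Real.exp_zero).symm]
    apply Real.exp_lt_exp.mpr
    linarith
  have hzun : ZUN (n+1) g t = ∑' x : T (n+1), term g t x.1 := rfl
  have hsplit : ∑' x : constSet (n+1), term g t x.1.1
      + ∑' x : ↥(constSet (n+1))ᶜ, term g t x.1.1 = ∑' x : T (n+1), term g t x.1 :=
    Summable.tsum_add_tsum_compl (f := fun y : T (n+1) => term g t y.1) (s := constSet (n+1))
      ENNReal.summable ENNReal.summable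
  have hconst := const_part g t (n+1) (by omega)
  constructor
  · rw [hzun, ← hsplit, hconst]
    exact le_self_add
  · rw [hzun, ← hsplit, hconst]
    apply add_le_add_right
    calc ∑' x : ↥(constSet (n+1))ᶜ, term g t x.1.1
        ≤ ∑' x : ↥(constSet (n+1))ᶜ, ENNReal.ofReal ((((n+1:ℕ):ℝ)^2)⁻¹)
            * ENNReal.ofReal (q ^ ((casimir (n+1) x.1.1 : ℚ):ℝ)) := by
          apply ENNReal.tsum_le_tsum
          intro x
          exact term_nonconst_le g hg t ht x.1 x.2
      _ = ENNReal.ofReal ((((n+1:ℕ):ℝ)^2)⁻¹)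
            * ∑' x : ↥(constSet (n+1))ᶜ, ENNReal.ofReal (q ^ ((casimir (n+1) x.1.1 : ℚ):ℝ)) :=
          ENNReal.tsum_mul_left
      _ ≤ ENNReal.ofReal ((((n+1:ℕ):ℝ)^2)⁻¹) * (Bq q * Kq q) := by
          apply mul_le_mul_right
          calc ∑' x : ↥(constSet (n+1))ᶜ, ENNReal.ofReal (q ^ ((casimir (n+1) x.1.1 : ℚ):ℝ))
              ≤ ∑' x : ↥(Set.univ : Set (T (n+1))),
                  ENNReal.ofReal (q ^ ((casimir (n+1) x.1.1 : ℚ):ℝ)) :=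
                ENNReal.tsum_mono_subtype (fun y : T (n+1) => ENNReal.ofReal (q ^ ((casimir (n+1) y.1 : ℚ):ℝ))) (Set.subset_univ _)
            _ = ∑' x : T (n+1), ENNReal.ofReal (q ^ ((casimir (n+1) x.1 : ℚ):ℝ)) :=
                tsum_univ (fun y : T (n+1) => ENNReal.ofReal (q ^ ((casimir (n+1) y.1 : ℚ):ℝ)))
            _ ≤ Bq q * Kq q := tail_le hq0 hq1 n

end main

end YM

/-- For a fixed genus `g ≥ 2` and area `t > 0`, with `q = e^{−t/2}`:
`lim_{N→∞} Z_{U(N)}(g,t) = θ(q)`. -/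
theorem ZUN_tendsto_theta (g : ℕ) (hg : 2 ≤ g) (t : ℝ) (ht : 0 < t) :
    Filter.Tendsto (fun N : ℕ => ZUN N g t) Filter.atTop
      (nhds (thetaE (Real.exp (-(t / 2))))) := by
  set q : ℝ := Real.exp (-(t/2)) with hq
  have hq0 : 0 < q := Real.exp_pos _
  have hq1 : q < 1 := by
    rw [hq, show (1:ℝ) = Real.exp 0 from (Real.exp_zero).symm]
    apply Real.exp_lt_exp.mpr
    linarith
  set C : ℝ≥0∞ := YM.Bq q * YM.Kq q with hC
  have hCtop : C ≠ ⊤ := ENNReal.mul_ne_top (YM.Bq_ne_top hq0 hq1) (YM.Kq_ne_top q)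
  have hub : Tendsto (fun N : ℕ => thetaE q + ENNReal.ofReal (((N:ℝ)^2)⁻¹) * C) atTop
      (nhds (thetaE q)) := by
    have h1 : Tendsto (fun N : ℕ => ((N:ℝ)^2)⁻¹) atTop (nhds 0) := by
      apply Filter.Tendsto.inv_tendsto_atTop
      exact (tendsto_pow_atTop (by norm_num : (2:ℕ) ≠ 0)).comp tendsto_natCast_atTop_atTop
    have h2 : Tendsto (fun N : ℕ => ENNReal.ofReal (((N:ℝ)^2)⁻¹)) atTop (nhds 0) := by
      rw [show (0:ℝ≥0∞) = ENNReal.ofReal 0 from by simp]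
      exact ENNReal.tendsto_ofReal h1
    have h3 : Tendsto (fun N : ℕ => ENNReal.ofReal (((N:ℝ)^2)⁻¹) * C) atTop (nhds 0) := by
      have := ENNReal.Tendsto.mul_const h2 (Or.inr hCtop)
      simpa using this
    have h4 := Filter.Tendsto.const_add (thetaE q) h3
    simpa using h4
  apply tendsto_of_tendsto_of_tendsto_of_le_of_le' tendsto_const_nhds hub
  · filter_upwards [Filter.eventually_ge_atTop 1] with N hN
    obtain ⟨n, rfl⟩ : ∃ n, N = n+1 := ⟨N-1, by omega⟩
    exact (YM.ZUN_split g hg t ht n).1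
  · filter_upwards [Filter.eventually_ge_atTop 1] with N hN
    obtain ⟨n, rfl⟩ : ∃ n, N = n+1 := ⟨N-1, by omega⟩
    exact (YM.ZUN_split g hg t ht n).2
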